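/- Let G be an archimedean, densely ordered, linearly ordered abelian group with small quotients. Then for every integer m ≥ 1 and all a, b, g ∈ G with a < b, the set {x ∈ G : a < x < b and x - g ∈ mG} is infinite (in particular nonempty). -/

import Mathlib

/-- An abelian group has small quotients if for every `n ≥ 1` the subgroup
`nG = {n • g : g ∈ G}` has finite index in `G`. -/
def SmallQuotients (G : Type*) [AddCommGroup G] : Prop :=
  ∀ n : ℕ, 1 ≤ n → (AddMonoidHom.range (n • AddMonoidHom.id G)).FiniteIndex

/-- In a densely ordered group there are elements `y > 0` with `n • y` arbitrarily small. -/
lemma exists_small_pos {G : Type*} [AddCommGroup G] [LinearOrder G] [IsOrderedAddMonoid G] [DenselyOrdered G]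
    (n : ℕ) {ε : G} (hε : 0 < ε) : ∃ y : G, 0 < y ∧ n • y < ε := by
  have key : ∀ k : ℕ, ∃ y : G, 0 < y ∧ 2 ^ k • y < ε := by
    intro k
    induction k with
    | zero =>
      obtain ⟨y, hy0, hyε⟩ := exists_between hε
      exact ⟨y, hy0, by simpa using hyε⟩
    | succ k ih =>
      obtain ⟨z, hz0, hzε⟩ := ih
      obtain ⟨w, hw0, hwz⟩ := exists_between hz0
      refine ⟨min w (z - w), lt_min hw0 (by simpa using hwz), ?_⟩
      have h2 : 2 ^ (k+1) • min w (z - w) ≤ 2 ^ k • z := by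
        have he : (2:ℕ) ^ (k+1) = 2 ^ k * 2 := by ring
        rw [he, mul_smul]
        have hle : (2:ℕ) • min w (z - w) ≤ z := by
          rw [two_nsmul]
          calc min w (z-w) + min w (z-w) ≤ w + (z - w) :=
                add_le_add (min_le_left _ _) (min_le_right _ _)
            _ = z := by abel
        exact nsmul_le_nsmul_right hle _
      exact lt_of_le_of_lt h2 hzε
  obtain ⟨y, hy0, hy⟩ := key n
  exact ⟨y, hy0, lt_of_le_of_lt (nsmul_le_nsmul_left hy0.le (Nat.lt_two_pow_self (n := n)).le) hy⟩

lemma exists_mem_interval_coset {G : Type*} [AddCommGroup G] [LinearOrder G] [IsOrderedAddMonoid G]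
    [Archimedean G] [DenselyOrdered G] (m : ℕ) (hm : 1 ≤ m) (g : G) {a b : G} (hab : a < b) :
    ∃ x : G, a < x ∧ x < b ∧ ∃ y : G, x - g = m • y := by
  obtain ⟨y, hy0, hyε⟩ := exists_small_pos m (sub_pos.mpr hab)
  have hh0 : 0 < m • y := nsmul_pos hy0 (by omega)
  obtain ⟨k, hk, -⟩ := existsUnique_add_zsmul_mem_Ioc hh0 g a
  refine ⟨g + k • (m • y), hk.1, ?_, k • y, ?_⟩
  · calc g + k • (m • y) ≤ a + m • y := hk.2
      _ < a + (b - a) := by exact (add_lt_add_iff_left a).mpr hyε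
      _ = b := by abel
  · rw [add_sub_cancel_left, smul_comm]

theorem interval_inter_coset_infinite (G : Type*) [AddCommGroup G] [LinearOrder G]
    [IsOrderedAddMonoid G]
    [Archimedean G] [DenselyOrdered G] (hsq : SmallQuotients G)
    (m : ℕ) (hm : 1 ≤ m) (a b g : G) (hab : a < b) :
    {x : G | a < x ∧ x < b ∧ ∃ y : G, x - g = m • y}.Infinite := by
  set S := {x : G | a < x ∧ x < b ∧ ∃ y : G, x - g = m • y} with hS
  by_contra hfin
  rw [Set.not_infinite] at hfin
  obtain ⟨x0, hx0⟩ := exists_mem_interval_coset m hm g hab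
  have hne : hfin.toFinset.Nonempty := ⟨x0, hfin.mem_toFinset.mpr hx0⟩
  set t := hfin.toFinset.min' hne with ht
  have htS : t ∈ S := hfin.mem_toFinset.mp (hfin.toFinset.min'_mem hne)
  obtain ⟨x, hx1, hx2, hx3⟩ := exists_mem_interval_coset m hm g htS.1
  have : t ≤ x := hfin.toFinset.min'_le x (hfin.mem_toFinset.mpr ⟨hx1, hx2.trans htS.2.1, hx3⟩)
  exact absurd hx2 (not_lt.mpr this)
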